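/- Let H be a real Hilbert space and define Ψ : H → ℝ by Ψ(g) = b·exp(‖g‖²/(2α)) for constants α, b > 0. Then its Fenchel conjugate satisfies Ψ*(f) ≤ ‖f‖·sqrt(2α·log(√α·‖f‖/b + 1)) − b for every f ∈ H. -/
import Mathlib


open scoped RealInnerProductSpace

theorem stmt_9 {H : Type*} [NormedAddCommGroup H] [InnerProductSpace ℝ H]
    (α b : ℝ) (hα : 0 < α) (hb : 0 < b) (f : H) :
    (⨆ g : H, (⟪f, g⟫ - b * Real.exp (‖g‖ ^ 2 / (2 * α)))) ≤
      ‖f‖ * Real.sqrt (2 * α * Real.log (Real.sqrt α * ‖f‖ / b + 1)) - b := by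
  have hr0 : (0:ℝ) ≤ ‖f‖ := norm_nonneg f
  set r := ‖f‖ with hrdef
  set a := Real.sqrt α with hadef
  have ha : 0 < a := Real.sqrt_pos.mpr hα
  have ha2 : a ^ 2 = α := Real.sq_sqrt hα.le
  have harg : (1:ℝ) ≤ a * r / b + 1 := by
    have : 0 ≤ a * r / b := by positivity
    linarith
  have hargpos : (0:ℝ) < a * r / b + 1 := lt_of_lt_of_le one_pos harg
  have hL : 0 ≤ Real.log (a * r / b + 1) := Real.log_nonneg harg
  set M := Real.sqrt (2 * α * Real.log (a * r / b + 1)) with hMdef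
  have hM0 : 0 ≤ M := Real.sqrt_nonneg _
  have hM2 : M ^ 2 = 2 * α * Real.log (a * r / b + 1) :=
    Real.sq_sqrt (by positivity)
  have hexpM : b * Real.exp (M ^ 2 / (2 * α)) = a * r + b := by
    have h2 : 2 * α * Real.log (a * r / b + 1) / (2 * α) = Real.log (a * r / b + 1) := by
      field_simp
    rw [hM2, h2, Real.exp_log hargpos]
    field_simp
  apply ciSup_le
  intro g
  have h1 : ⟪f, g⟫ ≤ r * ‖g‖ := real_inner_le_norm f g
  set t := ‖g‖ with htdef
  have ht0 : (0:ℝ) ≤ t := norm_nonneg g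
  have key : r * t - b * Real.exp (t ^ 2 / (2 * α)) ≤ r * M - b := by
    rcases le_or_gt t M with h | h
    · have he : (1:ℝ) ≤ Real.exp (t ^ 2 / (2 * α)) :=
        Real.one_le_exp (by positivity)
      nlinarith [mul_le_mul_of_nonneg_left h hr0]
    · have hconv : Real.exp (M ^ 2 / (2 * α)) * (1 + (t ^ 2 - M ^ 2) / (2 * α)) ≤
          Real.exp (t ^ 2 / (2 * α)) := by
        have h1 := Real.add_one_le_exp ((t ^ 2 - M ^ 2) / (2 * α))
        calc Real.exp (M ^ 2 / (2 * α)) * (1 + (t ^ 2 - M ^ 2) / (2 * α))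
            ≤ Real.exp (M ^ 2 / (2 * α)) * Real.exp ((t ^ 2 - M ^ 2) / (2 * α)) := by
              apply mul_le_mul_of_nonneg_left (by linarith) (Real.exp_nonneg _)
          _ = Real.exp (t ^ 2 / (2 * α)) := by
              rw [← Real.exp_add]; ring_nf
      have hbconv : (a * r + b) * (1 + (t ^ 2 - M ^ 2) / (2 * α)) ≤
          b * Real.exp (t ^ 2 / (2 * α)) := by
        calc (a * r + b) * (1 + (t ^ 2 - M ^ 2) / (2 * α))
            = b * (Real.exp (M ^ 2 / (2 * α)) * (1 + (t ^ 2 - M ^ 2) / (2 * α))) := by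
              rw [← mul_assoc, hexpM]
          _ ≤ b * Real.exp (t ^ 2 / (2 * α)) := by
              exact mul_le_mul_of_nonneg_left hconv hb.le
      set E := (t ^ 2 - M ^ 2) / (2 * α) with hEdef
      have hE : 2 * a ^ 2 * E = t ^ 2 - M ^ 2 := by
        rw [hEdef, ha2]; field_simp
      have h3 : 0 ≤ (t - M) * (2 * a * r * M + b * (t + M)) := by
        apply mul_nonneg (sub_nonneg.mpr h.le)
        have : 0 ≤ 2 * a * r * M := by positivity
        have : 0 ≤ b * (t + M) := by positivity
        linarith
      have h4 : 0 ≤ r * a * ((t - M - a) ^ 2 + a ^ 2) := by positivity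
      have h6 : (a * r + b) * (2 * a ^ 2 * E) = (a * r + b) * (t ^ 2 - M ^ 2) := by
        rw [hE]
      have h5 : 2 * a ^ 2 * (r * t - (a * r + b) * (1 + E)) ≤ 2 * a ^ 2 * (r * M - b) := by
        nlinarith [h3, h4, h6]
      have hpoly : r * t - (a * r + b) * (1 + E) ≤ r * M - b :=
        le_of_mul_le_mul_left h5 (by positivity)
      linarith
  linarith
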